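/- Let M be an invertible real symmetric n×n matrix. Define Υ(P) = −M − M(P−M)⁻¹M on symmetric matrices P with P − M positive definite, and Υ⁻¹(R) = M − M(R+M)⁻¹M on symmetric matrices R with R + M negative definite. Then for every symmetric P with P − M positive definite: (i) Υ(P) + M is negative definite, and (ii) Υ⁻¹(Υ(P)) = P. -/

import Mathlib

open Matrix
lemma posdef_conj {n : ℕ} {A B : Matrix (Fin n) (Fin n) ℝ}
    (hA : A.PosDef) (hBT : Bᵀ = B) (hB : IsUnit B) : (B * A * B).PosDef := by
  have hBH : Bᴴ = B := by rw [conjTranspose, hBT]; ext i j; simp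
  refine posDef_iff_dotProduct_mulVec.mpr ⟨?_, ?_⟩
  · show ((B * A * B)ᴴ = _)
    rw [conjTranspose_mul, conjTranspose_mul, hA.1.eq, hBH, Matrix.mul_assoc]
  · intro x hx
    have hBx : B *ᵥ x ≠ 0 := (Matrix.mulVec_injective_iff_isUnit.mpr hB |>.ne_iff' (by simp)).2 hx
    have h := hA.dotProduct_mulVec_pos hBx
    have key : star x ⬝ᵥ (B * A * B) *ᵥ x = star (B *ᵥ x) ⬝ᵥ A *ᵥ (B *ᵥ x) := by
      rw [← Matrix.mulVec_mulVec, ← Matrix.mulVec_mulVec, Matrix.dotProduct_mulVec (star x)]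
      congr 1
      rw [show star x = x from by simp, show star (B *ᵥ x) = B *ᵥ x from by simp,
        ← Matrix.mulVec_transpose, hBT]
    rw [key]; exact h

/-- For `M` symmetric invertible and `P` symmetric with `P − M ≻ 0`,
`Υ(P) = −M − M(P−M)⁻¹M` satisfies `Υ(P) + M ≺ 0` and `Υ⁻¹(Υ(P)) = P`
where `Υ⁻¹(R) = M − M(R+M)⁻¹M`. -/
theorem Upsilon_maps_into_and_inverse {n : ℕ}
    (M P : Matrix (Fin n) (Fin n) ℝ)
    (hM : Mᵀ = M) (hMinv : IsUnit M)
    (hP : Pᵀ = P) (hPM : (P - M).PosDef) :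
    (-((-M - M * (P - M)⁻¹ * M) + M)).PosDef ∧
      M - M * ((-M - M * (P - M)⁻¹ * M) + M)⁻¹ * M = P := by
  have hQ : IsUnit (P - M) := hPM.isUnit
  have hQd : IsUnit (P - M).det := isUnit_iff_isUnit_det _ |>.mp hQ
  have hMd : IsUnit M.det := isUnit_iff_isUnit_det _ |>.mp hMinv
  have e1 : (-M - M * (P - M)⁻¹ * M) + M = -(M * (P - M)⁻¹ * M) := by abel
  constructor
  · rw [e1, neg_neg]
    exact posdef_conj hPM.inv hM hMinv
  · rw [e1]
    have hX : IsUnit (M * (P - M)⁻¹ * M).det :=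
      isUnit_iff_isUnit_det _ |>.mp (posdef_conj hPM.inv hM hMinv).isUnit
    have hneg : (-(M * (P - M)⁻¹ * M))⁻¹ = -(M * (P - M)⁻¹ * M)⁻¹ :=
      Matrix.inv_eq_right_inv (by rw [neg_mul_neg, mul_nonsing_inv _ hX])
    rw [hneg, Matrix.mul_inv_rev, Matrix.mul_inv_rev, nonsing_inv_nonsing_inv _ hQd]
    have hMM : M * M⁻¹ = 1 := mul_nonsing_inv _ hMd
    have hMM' : M⁻¹ * M = 1 := nonsing_inv_mul _ hMd
    calc M - M * -(M⁻¹ * ((P - M) * M⁻¹)) * M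
        = M + M * M⁻¹ * (P - M) * (M⁻¹ * M) := by noncomm_ring
      _ = P := by rw [hMM, hMM']; noncomm_ring
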